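/- Let p be a prime and let N be a primitive positive definite ternary form which is p-hyperbolic with exponent j for some integer j ≥ 1. Then there exist exactly two subgroups K of ℤ³ of index p with norm ideal 𝔫(K) = pℤ. -/

import Mathlib

/-- A ternary quadratic form `Q(x,y,z) = ax² + by² + cz² + r·yz + s·zx + t·xy`
with integer coefficients. -/
structure TernaryForm where
  a : ℤ
  b : ℤ
  c : ℤ
  r : ℤ
  s : ℤ
  t : ℤ

/-- Evaluation of a ternary form on `R³` for any commutative ring `R`. -/
def TernaryForm.eval {R : Type*} [CommRing R] (Q : TernaryForm) (v : Fin 3 → R) : R :=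
  (Q.a : R) * v 0 ^ 2 + (Q.b : R) * v 1 ^ 2 + (Q.c : R) * v 2 ^ 2 +
    (Q.r : R) * v 1 * v 2 + (Q.s : R) * v 2 * v 0 + (Q.t : R) * v 0 * v 1

/-- A ternary form is positive definite if `Q(v) > 0` for all `v ≠ 0`. -/
def TernaryForm.PosDef (Q : TernaryForm) : Prop :=
  ∀ v : Fin 3 → ℤ, v ≠ 0 → 0 < Q.eval v

/-- The Gram matrix of a ternary form: the symmetric rational matrix `G`
with `Q(v) = vᵀ G v`. -/
def TernaryForm.gram (Q : TernaryForm) : Matrix (Fin 3) (Fin 3) ℚ :=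
  !![(Q.a : ℚ), (Q.t : ℚ) / 2, (Q.s : ℚ) / 2;
     (Q.t : ℚ) / 2, (Q.b : ℚ), (Q.r : ℚ) / 2;
     (Q.s : ℚ) / 2, (Q.r : ℚ) / 2, (Q.c : ℚ)]

/-- The discriminant of a ternary form: the determinant of its Gram matrix. -/
def TernaryForm.disc (Q : TernaryForm) : ℚ := Q.gram.det

/-- `(N, M)` is a representable pair by scaling `n` if `dN = n·dM` and there is a
`ℤ`-linear map `T : ℤ³ → ℤ³` with `Q_N(T v) = n · Q_M(v)` for all `v`. -/
def RepPair (n : ℕ) (N M : TernaryForm) : Prop :=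
  N.disc = (n : ℚ) * M.disc ∧
    ∃ T : (Fin 3 → ℤ) →ₗ[ℤ] (Fin 3 → ℤ), ∀ v, N.eval (T v) = (n : ℤ) * M.eval v

/-- The norm ideal of a subset `K ⊆ ℤ³`: the ideal of `ℤ` generated by `{Q(x) : x ∈ K}`. -/
def TernaryForm.normIdeal (Q : TernaryForm) (K : Set (Fin 3 → ℤ)) : Ideal ℤ :=
  Ideal.span (Q.eval '' K)

/-- A ternary form is primitive if the norm ideal of `ℤ³` is all of `ℤ`. -/
def TernaryForm.Primitive (Q : TernaryForm) : Prop :=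
  Q.normIdeal Set.univ = ⊤

/-- `Λ_p(N) = {x ∈ ℤ³ : Q_N(x + z) ≡ Q_N(z) (mod p) for all z ∈ ℤ³}`. -/
def LambdaSet (p : ℕ) (N : TernaryForm) : Set (Fin 3 → ℤ) :=
  {x | ∀ z : Fin 3 → ℤ, (p : ℤ) ∣ N.eval (x + z) - N.eval z}

/-- `M` is a `Γ_p`-descendant of `N` if there is a subgroup `K ≤ ℤ³` of index `p` with
norm ideal `pℤ` and a group isomorphism `T : ℤ³ → K` with `Q_N(T v) = p · Q_M(v)`. -/
def GammaDescendant (p : ℕ) (M N : TernaryForm) : Prop :=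
  ∃ K : AddSubgroup (Fin 3 → ℤ), K.index = p ∧
    N.normIdeal (K : Set (Fin 3 → ℤ)) = Ideal.span {(p : ℤ)} ∧
    ∃ T : (Fin 3 → ℤ) →+ (Fin 3 → ℤ), Function.Injective T ∧
      Set.range T = (K : Set (Fin 3 → ℤ)) ∧
      ∀ v, N.eval (T v) = (p : ℤ) * M.eval v

/-- `N` is `p`-hyperbolic with exponent `j` if over `ℤ_p` there are a unit `δ` and a basis
`y₁, y₂, y₃` of `ℤ_p³` with `Q_N(a y₁ + b y₂ + c y₃) = ab + δ p^j c²`. -/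
def IsHyperbolic (p : ℕ) [Fact p.Prime] (j : ℕ) (N : TernaryForm) : Prop :=
  ∃ δ : ℤ_[p], IsUnit δ ∧ ∃ B : Module.Basis (Fin 3) ℤ_[p] (Fin 3 → ℤ_[p]),
    ∀ a b c : ℤ_[p],
      N.eval (a • B 0 + b • B 1 + c • B 2) = a * b + δ * (p : ℤ_[p]) ^ j * c ^ 2

/-- Two ternary forms lie in the same genus if they are equivalent over `ℤ_ℓ`
for every prime `ℓ`. -/
def SameGenus (M M' : TernaryForm) : Prop :=
  ∀ (ℓ : ℕ) [Fact ℓ.Prime], ∃ U : Matrix (Fin 3) (Fin 3) ℤ_[ℓ],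
    IsUnit U.det ∧ ∀ v : Fin 3 → ℤ_[ℓ], M'.eval v = M.eval (U.mulVec v)


lemma TernaryForm.eval_cast {R : Type*} [CommRing R] (Q : TernaryForm) (x : Fin 3 → ℤ) :
    ((Q.eval x : ℤ) : R) = Q.eval (fun i => (x i : R)) := by
  simp only [TernaryForm.eval]
  push_cast
  ring

lemma TernaryForm.eval_zsmul (Q : TernaryForm) (n : ℤ) (v : Fin 3 → ℤ) :
    Q.eval (n • v) = n ^ 2 * Q.eval v := by
  simp only [TernaryForm.eval, Pi.smul_apply, smul_eq_mul]
  ring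

set_option maxHeartbeats 2000000 in
/-- If `N` is primitive and `p`-hyperbolic with exponent `j ≥ 1`, then there
are exactly two subgroups of `ℤ³` of index `p` with norm ideal `pℤ`. -/
theorem stmt_6 (p : ℕ) [Fact p.Prime] (N : TernaryForm) (hN : N.PosDef)
    (hNprim : N.Primitive) (j : ℕ) (hj : 1 ≤ j) (hhyp : IsHyperbolic p j N) :
    ∃ K₁ K₂ : AddSubgroup (Fin 3 → ℤ), K₁ ≠ K₂ ∧
      (K₁.index = p ∧ N.normIdeal (K₁ : Set (Fin 3 → ℤ)) = Ideal.span {(p : ℤ)}) ∧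
      (K₂.index = p ∧ N.normIdeal (K₂ : Set (Fin 3 → ℤ)) = Ideal.span {(p : ℤ)}) ∧
      ∀ K : AddSubgroup (Fin 3 → ℤ), K.index = p →
        N.normIdeal (K : Set (Fin 3 → ℤ)) = Ideal.span {(p : ℤ)} → K = K₁ ∨ K = K₂ := by
  classical
  have hp : p.Prime := Fact.out
  obtain ⟨δ, hδu, B, hB⟩ := hhyp
  set ι : (Fin 3 → ℤ) → (Fin 3 → ℤ_[p]) := fun x i => ((x i : ℤ) : ℤ_[p]) with hι
  have hι_add : ∀ x y, ι (x + y) = ι x + ι y := by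
    intro x y; funext i; simp [ι]
  set co : Fin 3 → (Fin 3 → ℤ) → ℤ_[p] := fun k x => B.repr (ι x) k with hco
  have hco_add : ∀ k x y, co k (x + y) = co k x + co k y := by
    intro k x y; simp [co, hι_add, map_add]
  have key1 : ∀ x : Fin 3 → ℤ,
      ((N.eval x : ℤ) : ℤ_[p]) = co 0 x * co 1 x + δ * (p : ℤ_[p]) ^ j * (co 2 x) ^ 2 := by
    intro x
    rw [N.eval_cast]
    have hx := B.sum_repr (ι x)
    rw [Fin.sum_univ_three] at hx
    show N.eval (ι x) = _
    conv_lhs => rw [← hx]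
    rw [hB]
  set ψ : ℤ_[p] →+* ZMod p := PadicInt.toZMod with hψ
  have hψp : ψ ((p : ℕ) : ℤ_[p]) = 0 := by rw [map_natCast]; exact ZMod.natCast_self p
  set A : (Fin 3 → ℤ) →+ ZMod p :=
    AddMonoidHom.mk' (fun x => ψ (co 0 x))
      (by intro x y; show ψ (co 0 (x + y)) = _; rw [hco_add, map_add]) with hA
  set Bf : (Fin 3 → ℤ) →+ ZMod p :=
    AddMonoidHom.mk' (fun x => ψ (co 1 x))
      (by intro x y; show ψ (co 1 (x + y)) = _; rw [hco_add, map_add]) with hBf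
  have key2 : ∀ x : Fin 3 → ℤ, ((N.eval x : ℤ) : ZMod p) = A x * Bf x := by
    intro x
    rw [← map_intCast ψ (N.eval x), key1, map_add, map_mul, map_mul, map_mul, map_pow,
      hψp, zero_pow (by omega : j ≠ 0)]
    simp [A, Bf]
  have approx : ∀ t : Fin 3 → ℤ_[p], ∃ x : Fin 3 → ℤ, ∃ w : Fin 3 → ℤ_[p],
      ι x = t + ((p : ℤ_[p]) ^ 2) • w := by
    intro t
    have h : ∀ i : Fin 3, ∃ w : ℤ_[p],
        ((((t i).appr 2 : ℕ) : ℤ) : ℤ_[p]) = t i + (p : ℤ_[p]) ^ 2 * w := by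
      intro i
      have hs := PadicInt.appr_spec 2 (t i)
      rw [Ideal.mem_span_singleton] at hs
      obtain ⟨w, hw⟩ := hs
      refine ⟨-w, ?_⟩
      push_cast
      have h2 : (((t i).appr 2 : ℕ) : ℤ_[p]) = t i - (p : ℤ_[p]) ^ 2 * w := by
        rw [← hw]; ring
      rw [h2]; ring
    choose w hw using h
    exact ⟨fun i => (((t i).appr 2 : ℕ) : ℤ), w, funext fun i => by
      simpa [ι] using hw i⟩
  have coords : ∀ α β γ : ℤ_[p], ∃ x : Fin 3 → ℤ, ∃ a' b' c' : ℤ_[p],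
      co 0 x = α + (p : ℤ_[p]) ^ 2 * a' ∧ co 1 x = β + (p : ℤ_[p]) ^ 2 * b' ∧
        co 2 x = γ + (p : ℤ_[p]) ^ 2 * c' := by
    intro α β γ
    obtain ⟨x, w, hx⟩ := approx (α • B 0 + β • B 1 + γ • B 2)
    refine ⟨x, B.repr w 0, B.repr w 1, B.repr w 2, ?_, ?_, ?_⟩ <;>
      simp [co, hx, map_add, map_smul, Module.Basis.repr_self, Finsupp.single_apply, mul_comm]
  obtain ⟨x₀, a₀, b₀, c₀, h00, h01, h02⟩ := coords ((p : ℤ_[p])) 1 0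
  obtain ⟨x₁, a₁, b₁, c₁, h10, h11, h12⟩ := coords 1 ((p : ℤ_[p])) 0
  obtain ⟨j', rfl⟩ : ∃ j', j = j' + 1 := ⟨j - 1, by omega⟩
  have hAx₀ : A x₀ = 0 := by
    show ψ (co 0 x₀) = 0
    rw [h00, map_add, map_mul, map_pow, hψp]; ring
  have hBx₀ : Bf x₀ = 1 := by
    show ψ (co 1 x₀) = 1
    rw [h01, map_add, map_mul, map_pow, hψp, map_one]; ring
  have hAx₁ : A x₁ = 1 := by
    show ψ (co 0 x₁) = 1
    rw [h10, map_add, map_mul, map_pow, hψp, map_one]; ring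
  have hBx₁ : Bf x₁ = 0 := by
    show ψ (co 1 x₁) = 0
    rw [h11, map_add, map_mul, map_pow, hψp]; ring
  -- index of kernels
  have index_of : ∀ (F : (Fin 3 → ℤ) →+ ZMod p) (x' : Fin 3 → ℤ), F x' = 1 →
      F.ker.index = p := by
    intro F x' hx'
    have hsurj : Function.Surjective F := by
      intro g
      obtain ⟨n, rfl⟩ := ZMod.intCast_surjective g
      exact ⟨n • x', by rw [map_zsmul, hx']; simp⟩
    rw [AddSubgroup.index_ker, AddMonoidHom.range_eq_top.2 hsurj]
    rw [Nat.card_congr AddSubgroup.topEquiv.toEquiv, Nat.card_zmod]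
  -- non-divisibility by p²
  have notdvd : ∀ x : Fin 3 → ℤ, (∃ s : ℤ_[p],
      ((N.eval x : ℤ) : ℤ_[p]) = (p : ℤ_[p]) + (p : ℤ_[p]) ^ 2 * s) →
      ¬ ((p : ℤ) ^ 2 ∣ N.eval x) := by
    rintro x ⟨s, hs⟩ hdvd
    set ψ₂ : ℤ_[p] →+* ZMod (p ^ 2) := PadicInt.toZModPow 2 with hψ₂
    have hψ₂p2 : ψ₂ ((p : ℤ_[p]) ^ 2) = 0 := by
      rw [map_pow, map_natCast]
      have h2 : ((p : ZMod (p ^ 2))) ^ 2 = ((p ^ 2 : ℕ) : ZMod (p ^ 2)) := by push_cast; ring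
      rw [h2, ZMod.natCast_self]
    have hcast : ((N.eval x : ℤ) : ZMod (p ^ 2)) = ((p : ℕ) : ZMod (p ^ 2)) := by
      rw [← map_intCast ψ₂ (N.eval x), hs, map_add, map_mul, hψ₂p2, map_natCast]
      ring
    have hzero : ((N.eval x : ℤ) : ZMod (p ^ 2)) = 0 := by
      rw [ZMod.intCast_zmod_eq_zero_iff_dvd]
      exact_mod_cast hdvd
    rw [hcast, ZMod.natCast_eq_zero_iff] at hzero
    have := Nat.le_of_dvd hp.pos hzero
    nlinarith [hp.two_le]
  have hnd₀ : ¬ ((p : ℤ) ^ 2 ∣ N.eval x₀) := by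
    refine notdvd x₀ ⟨a₀ + (p : ℤ_[p]) * b₀ + (p : ℤ_[p]) ^ 2 * (a₀ * b₀)
      + δ * (p : ℤ_[p]) ^ (j' + 1) * (p : ℤ_[p]) ^ 2 * c₀ ^ 2, ?_⟩
    rw [key1, h00, h01, h02]; ring
  have hnd₁ : ¬ ((p : ℤ) ^ 2 ∣ N.eval x₁) := by
    refine notdvd x₁ ⟨b₁ + (p : ℤ_[p]) * a₁ + (p : ℤ_[p]) ^ 2 * (a₁ * b₁)
      + δ * (p : ℤ_[p]) ^ (j' + 1) * (p : ℤ_[p]) ^ 2 * c₁ ^ 2, ?_⟩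
    rw [key1, h10, h11, h12]; ring
  -- norm ideal of a kernel
  have norm_of : ∀ (F : (Fin 3 → ℤ) →+ ZMod p),
      (∀ x : Fin 3 → ℤ, F x = 0 → (p : ℤ) ∣ N.eval x) →
      ∀ x' : Fin 3 → ℤ, F x' = 0 → ¬ ((p : ℤ) ^ 2 ∣ N.eval x') →
      N.normIdeal (F.ker : Set (Fin 3 → ℤ)) = Ideal.span {(p : ℤ)} := by
    intro F hFdvd x' hx'mem hx'nd
    apply le_antisymm
    · rw [TernaryForm.normIdeal, Ideal.span_le]
      rintro _ ⟨x, hx, rfl⟩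
      rw [SetLike.mem_coe, Ideal.mem_span_singleton]
      exact hFdvd x hx
    · rw [Ideal.span_le, Set.singleton_subset_iff, SetLike.mem_coe]
      -- p² ∈ normIdeal
      have hp2 : (p : ℤ) ^ 2 ∈ N.normIdeal (F.ker : Set (Fin 3 → ℤ)) := by
        have hmap := Submodule.map_span (LinearMap.lsmul ℤ ℤ ((p : ℤ) ^ 2))
          (N.eval '' (Set.univ : Set (Fin 3 → ℤ)))
        rw [show Submodule.span ℤ (N.eval '' (Set.univ : Set (Fin 3 → ℤ))) = (⊤ : Ideal ℤ) from hNprim] at hmap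
        have hmem : (p : ℤ) ^ 2 ∈ Submodule.map (LinearMap.lsmul ℤ ℤ ((p : ℤ) ^ 2))
            (⊤ : Ideal ℤ) := ⟨1, trivial, by simp⟩
        rw [hmap] at hmem
        refine Ideal.span_le.2 ?_ hmem
        rintro _ ⟨_, ⟨v, -, rfl⟩, rfl⟩
        refine Ideal.subset_span ⟨(p : ℤ) • v, ?_, ?_⟩
        · show (p : ℤ) • v ∈ F.ker
          rw [AddMonoidHom.mem_ker, map_zsmul, zsmul_eq_mul]
          push_cast
          rw [ZMod.natCast_self]; ring
        · rw [TernaryForm.eval_zsmul]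
          simp [LinearMap.lsmul]
      have hx'I : N.eval x' ∈ N.normIdeal (F.ker : Set (Fin 3 → ℤ)) :=
        Ideal.subset_span ⟨x', hx'mem, rfl⟩
      obtain ⟨m, hm⟩ := hFdvd x' hx'mem
      have hpm : ¬ (p : ℤ) ∣ m := by
        rintro ⟨k, hk⟩
        exact hx'nd ⟨k, by rw [hm, hk]; ring⟩
      have hcop : IsCoprime ((p : ℤ)) m := ((Nat.prime_iff_prime_int.mp hp).coprime_iff_not_dvd).2 hpm
      obtain ⟨u, v, huv⟩ := hcop
      have : (p : ℤ) = u * (p : ℤ) ^ 2 + v * N.eval x' := by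
        rw [hm]; linear_combination (-(p : ℤ)) * huv
      rw [this]
      exact add_mem (Ideal.mul_mem_left _ _ hp2) (Ideal.mul_mem_left _ _ hx'I)
  -- kernel membership divisibility
  have hAdvd : ∀ x : Fin 3 → ℤ, A x = 0 → (p : ℤ) ∣ N.eval x := by
    intro x hx
    have h := key2 x
    rw [hx, zero_mul] at h
    exact (ZMod.intCast_zmod_eq_zero_iff_dvd _ p).mp h
  have hBdvd : ∀ x : Fin 3 → ℤ, Bf x = 0 → (p : ℤ) ∣ N.eval x := by
    intro x hx
    have h := key2 x
    rw [hx, mul_zero] at h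
    exact (ZMod.intCast_zmod_eq_zero_iff_dvd _ p).mp h
  refine ⟨A.ker, Bf.ker, ?_, ⟨index_of A x₁ hAx₁, norm_of A hAdvd x₀ hAx₀ hnd₀⟩,
    ⟨index_of Bf x₀ hBx₀, norm_of Bf hBdvd x₁ hBx₁ hnd₁⟩, ?_⟩
  · intro h
    have hx₁ : x₁ ∈ Bf.ker := hBx₁
    rw [← h] at hx₁
    have : A x₁ = 0 := hx₁
    rw [hAx₁] at this
    exact one_ne_zero this
  · intro K hKind hKnorm
    have hmem : ∀ x ∈ K, A x * Bf x = 0 := by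
      intro x hx
      have h1 : N.eval x ∈ N.normIdeal (K : Set (Fin 3 → ℤ)) :=
        Ideal.subset_span ⟨x, hx, rfl⟩
      rw [hKnorm, Ideal.mem_span_singleton] at h1
      have h2 := (ZMod.intCast_zmod_eq_zero_iff_dvd (N.eval x) p).mpr (by exact_mod_cast h1)
      rw [key2] at h2
      exact h2
    have hdisj : (∀ x ∈ K, A x = 0) ∨ (∀ x ∈ K, Bf x = 0) := by
      by_contra h
      push_neg at h
      obtain ⟨⟨u, hu, hAu⟩, ⟨v, hv, hBv⟩⟩ := h
      have hBu : Bf u = 0 := ((mul_eq_zero.mp (hmem u hu)).resolve_left hAu)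
      have hAv : A v = 0 := by
        rcases mul_eq_zero.mp (hmem v hv) with h' | h'
        · exact h'
        · exact absurd h' hBv
      have h3 := hmem (u + v) (add_mem hu hv)
      rw [map_add, map_add, hBu, hAv, add_zero, zero_add] at h3
      rcases mul_eq_zero.mp h3 with h' | h'
      · exact hAu h'
      · exact hBv h'
    have heq : ∀ (F : (Fin 3 → ℤ) →+ ZMod p), F.ker.index = p → K ≤ F.ker → K = F.ker := by
      intro F hFind hle
      have h4 := AddSubgroup.relIndex_mul_index hle
      rw [hKind, hFind] at h4
      have h5 : K.relIndex F.ker = 1 := by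
        have hp0 : p ≠ 0 := hp.ne_zero
        exact Nat.eq_of_mul_eq_mul_right (Nat.pos_of_ne_zero hp0) (by omega)
      exact le_antisymm hle (AddSubgroup.relIndex_eq_one.mp h5)
    rcases hdisj with hall | hall
    · exact Or.inl (heq A (index_of A x₁ hAx₁) fun x hx => hall x hx)
    · exact Or.inr (heq Bf (index_of Bf x₀ hBx₀) fun x hx => hall x hx)
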